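/- In a normed plane, c_D(‖·‖) = 1 if and only if Birkhoff orthogonality is a symmetric relation (i.e., the plane is a Radon plane). -/

import Mathlib

open Module

variable {V : Type*} [NormedAddCommGroup V] [NormedSpace ℝ V]

noncomputable def sine {V : Type*} [NormedAddCommGroup V] [NormedSpace ℝ V] (x y : V) : ℝ :=
  ⨅ t : ℝ, ‖x + t • y‖

def BOrth {V : Type*} [NormedAddCommGroup V] [NormedSpace ℝ V] (x y : V) : Prop :=
  ∀ t : ℝ, ‖x‖ ≤ ‖x + t • y‖

noncomputable def cD (V : Type*) [NormedAddCommGroup V] [NormedSpace ℝ V] : ℝ :=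
  sInf {r : ℝ | ∃ x y : V, ‖x‖ = 1 ∧ ‖y‖ = 1 ∧ BOrth x y ∧ r = sine y x}

noncomputable def cR (V : Type*) [NormedAddCommGroup V] [NormedSpace ℝ V] : ℝ :=
  sSup {r : ℝ | ∃ x y : V, ‖x‖ = 1 ∧ ‖y‖ = 1 ∧ r = |sine x y - sine y x|}

lemma sine_bddBelow (x y : V) : BddBelow (Set.range fun t : ℝ => ‖x + t • y‖) :=
  ⟨0, by rintro r ⟨t, rfl⟩; exact norm_nonneg _⟩

lemma sine_le_norm (x y : V) : sine x y ≤ ‖x‖ := by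
  have := ciInf_le (sine_bddBelow x y) 0
  simp at this
  exact this

lemma sine_nonneg (x y : V) : 0 ≤ sine x y :=
  le_ciInf fun t => norm_nonneg _

lemma bOrth_iff_sine {x y : V} : BOrth x y ↔ ‖x‖ ≤ sine x y := by
  constructor
  · intro h; exact le_ciInf h
  · intro h t; exact h.trans (ciInf_le (sine_bddBelow x y) t)

lemma bOrth_smul_right {x y : V} (b : ℝ) (h : BOrth x y) : BOrth x (b • y) := by
  intro t
  rw [smul_smul]
  exact h (t * b)

lemma bOrth_smul_left {x y : V} (a : ℝ) (h : BOrth x y) : BOrth (a • x) y := by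
  rcases eq_or_ne a 0 with rfl | ha
  · intro t; simp
  · intro t
    have key : a • x + t • y = a • (x + (t / a) • y) := by
      rw [smul_add, smul_smul]
      have : a * (t / a) = t := by field_simp
      rw [this]
    rw [key, norm_smul, norm_smul]
    exact mul_le_mul_of_nonneg_left (h (t / a)) (norm_nonneg _)

lemma exists_unit_bOrth (hV : finrank ℝ V = 2) :
    ∃ x y : V, ‖x‖ = 1 ∧ ‖y‖ = 1 ∧ BOrth x y := by
  have : FiniteDimensional ℝ V := FiniteDimensional.of_finrank_pos (by omega)
  have b := finBasisOfFinrankEq ℝ V hV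
  set u := b 0 with hu
  set v := b 1 with hvdef
  have hv : v ≠ 0 := b.ne_zero 1
  have hvn : 0 < ‖v‖ := norm_pos_iff.mpr hv
  set f : ℝ → ℝ := fun t => ‖u + t • v‖ with hf
  have hcont : Continuous f := by
    apply Continuous.norm
    exact continuous_const.add ((continuous_id.smul continuous_const))
  set R : ℝ := (2 * ‖u‖ + 1) / ‖v‖ with hR
  have hR0 : 0 ≤ R := by positivity
  obtain ⟨t₀, ht₀mem, ht₀⟩ := (isCompact_Icc (a := -R) (b := R)).exists_isMinOn
    ⟨0, by constructor <;> simp [hR0, neg_nonpos.mpr hR0]⟩ hcont.continuousOn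
  have hmin : ∀ t, f t₀ ≤ f t := by
    intro t
    by_cases hmem : t ∈ Set.Icc (-R) R
    · exact ht₀ hmem
    · have habs : R < |t| := by
        rcases lt_or_ge t (-R) with hlt | hge
        · have ht0 : t < 0 := lt_of_lt_of_le hlt (neg_nonpos.mpr hR0)
          rw [abs_of_neg ht0]; linarith
        · have : R < t := by
            by_contra hc; push_neg at hc
            exact hmem ⟨hge, hc⟩
          exact lt_of_lt_of_le this (le_abs_self t)
      have h1 : |t| * ‖v‖ - ‖u‖ ≤ f t := by
        have hineq : ‖t • v‖ ≤ f t + ‖u‖ := by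
          have : t • v = (u + t • v) - u := by abel
          rw [this]
          exact norm_sub_le _ _
        rw [norm_smul, Real.norm_eq_abs] at hineq
        linarith
      have h2 : 2 * ‖u‖ + 1 = R * ‖v‖ := by
        rw [hR]; field_simp
      have h3 : R * ‖v‖ < |t| * ‖v‖ := mul_lt_mul_of_pos_right habs hvn
      have h4 : f t₀ ≤ f 0 := ht₀ ⟨neg_nonpos.mpr hR0, hR0⟩
      have h5 : f 0 = ‖u‖ := by simp [hf]
      linarith
  set z := u + t₀ • v with hz
  have hz0 : z ≠ 0 := by
    intro hz0
    have hli := b.linearIndependent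
    have hsum : ∑ i : Fin 2, (if i = 0 then (1:ℝ) else t₀) • b i = 0 := by
      rw [Fin.sum_univ_two]
      simpa using hz0
    have := Fintype.linearIndependent_iff.mp hli _ hsum 0
    simp at this
  refine ⟨‖z‖⁻¹ • z, ‖v‖⁻¹ • v, ?_, ?_, ?_⟩
  · rw [norm_smul, norm_inv, norm_norm, inv_mul_cancel₀ (norm_ne_zero_iff.mpr hz0)]
  · rw [norm_smul, norm_inv, norm_norm, inv_mul_cancel₀ (norm_ne_zero_iff.mpr hv)]
  · apply bOrth_smul_left
    apply bOrth_smul_right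
    intro t
    have hm := hmin (t₀ + t)
    have he : z + t • v = u + (t₀ + t) • v := by
      rw [hz, add_smul]; abel
    rw [he]
    exact hm

theorem cD_eq_one_iff_radon (hV : finrank ℝ V = 2) :
    cD V = 1 ↔ ∀ x y : V, BOrth x y → BOrth y x := by
  set S := {r : ℝ | ∃ x y : V, ‖x‖ = 1 ∧ ‖y‖ = 1 ∧ BOrth x y ∧ r = sine y x} with hS
  have hcd : cD V = sInf S := rfl
  have hbdd : BddBelow S := by
    refine ⟨0, ?_⟩
    rintro r ⟨x, y, hx, hy, hxy, rfl⟩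
    exact sine_nonneg y x
  constructor
  · intro h x y hxy
    rcases eq_or_ne x 0 with rfl | hx0
    · intro t; simp
    rcases eq_or_ne y 0 with rfl | hy0
    · intro t; simp
    set u := ‖x‖⁻¹ • x with hudef
    set v := ‖y‖⁻¹ • y with hvdef
    have hu : ‖u‖ = 1 := by
      rw [hudef, norm_smul, norm_inv, norm_norm,
        inv_mul_cancel₀ (norm_ne_zero_iff.mpr hx0)]
    have hv : ‖v‖ = 1 := by
      rw [hvdef, norm_smul, norm_inv, norm_norm,
        inv_mul_cancel₀ (norm_ne_zero_iff.mpr hy0)]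
    have huv : BOrth u v := bOrth_smul_right _ (bOrth_smul_left _ hxy)
    have hmem : sine v u ∈ S := ⟨u, v, hu, hv, huv, rfl⟩
    have h1 : (1:ℝ) ≤ sine v u := by
      have hle := csInf_le hbdd hmem
      rw [← hcd, h] at hle
      exact hle
    have hvu : BOrth v u := bOrth_iff_sine.mpr (by rw [hv]; exact h1)
    have hfin := bOrth_smul_right ‖x‖ (bOrth_smul_left ‖y‖ hvu)
    rwa [hvdef, hudef, smul_inv_smul₀ (norm_ne_zero_iff.mpr hy0),
      smul_inv_smul₀ (norm_ne_zero_iff.mpr hx0)] at hfin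
  · intro h
    have hsub : ∀ r ∈ S, r = 1 := by
      rintro r ⟨x, y, hx, hy, hxy, rfl⟩
      have hyx := h x y hxy
      have h1 : ‖y‖ ≤ sine y x := bOrth_iff_sine.mp hyx
      have h2 : sine y x ≤ ‖y‖ := sine_le_norm y x
      rw [hy] at h1 h2
      linarith
    obtain ⟨x, y, hx, hy, hxy⟩ := exists_unit_bOrth hV
    have hmem : sine y x ∈ S := ⟨x, y, hx, hy, hxy, rfl⟩
    have h1mem : (1:ℝ) ∈ S := by
      have := hsub _ hmem
      rwa [this] at hmem
    have hSeq : S = {1} := Set.eq_singleton_iff_unique_mem.mpr ⟨h1mem, hsub⟩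
    rw [hcd, hSeq, csInf_singleton]
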